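/- With the setup of the RWRE change-of-measure identity, for any N ≥ 1 and y ∈ ℤ: P^{ω,ε}(S_N = y) = P⁰(S_N = y) + Σ_{k=1}^{N} ε^{k/2} Σ_{(z₁,…,zₖ)} ψₖ(z₁,…,zₖ)·ω_{z₁}⋯ω_{zₖ}, where the inner sum runs over 0 ≤ i₁ < ⋯ < iₖ ≤ N-1 and j₁,…,jₖ ∈ ℤ with z_l = (i_l, j_l), and ψₖ(z₁,…,zₖ) = 2^{-k}·P⁰(S_{i₁} = j₁)·∏_{l=2}^{k}[P⁰(S_{i_l - i_{l-1} - 1} = j_l - j_{l-1} - 1) - P⁰(S_{i_l - i_{l-1} - 1} = j_l - j_{l-1} + 1)]·[P⁰(S_{N - iₖ - 1} = y - jₖ - 1) - P⁰(S_{N - iₖ - 1} = y - jₖ + 1)]. -/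

import Mathlib

/-- A `±1` step encoded by a Boolean (`true` = up). -/
def stepZ (b : Bool) : ℤ := if b then 1 else -1

/-- Position at time `n` of the nearest-neighbor path with steps `σ`, started at `0`. -/
def walk {N : ℕ} (σ : Fin N → Bool) (n : ℕ) : ℤ :=
  ∑ i : Fin N, if (i : ℕ) < n then stepZ (σ i) else 0

/-- The quenched RWRE transition probability `P^{ω,ε}(S_N = y)`. -/
noncomputable def quenchedProb (ω : ℕ → ℤ → ℝ) (ε : ℝ) (N : ℕ) (y : ℤ) : ℝ :=
  ∑ σ : Fin N → Bool,
    if walk σ N = y then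
      ∏ i : Fin N, (1 + (stepZ (σ i) : ℝ) * Real.sqrt ε * ω i (walk σ i)) / 2
    else 0

/-- The SSRW transition probability `P⁰(S_n = m)`. -/
noncomputable def ssrwProb (n : ℕ) (m : ℤ) : ℝ :=
  ((Finset.univ.filter fun σ : Fin n → Bool =>
      (∑ i : Fin n, if σ i then (1 : ℤ) else -1) = m).card : ℝ) / 2 ^ n

/-- `P⁰(S_n = d - 1) - P⁰(S_n = d + 1)`. -/
noncomputable def Dker (n : ℕ) (d : ℤ) : ℝ := ssrwProb n (d - 1) - ssrwProb n (d + 1)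

/-- The coefficient `ψ_{k+1}(z₁,…,z_{k+1})` of the polynomial chaos expansion, for
times `0 ≤ i₁ < ⋯ < i_{k+1} ≤ N-1` (encoded as `i : Fin (k+1) → Fin N`) and space
points `j : Fin (k+1) → ℤ`. -/
noncomputable def psiCoef (N : ℕ) (y : ℤ) (k : ℕ)
    (i : Fin (k + 1) → Fin N) (j : Fin (k + 1) → ℤ) : ℝ :=
  (1 / 2 ^ (k + 1)) * ssrwProb (i 0) (j 0) *
    (∏ l : Fin k,
      Dker ((i l.succ : ℕ) - (i l.castSucc : ℕ) - 1) (j l.succ - j l.castSucc)) *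
    Dker (N - (i (Fin.last k) : ℕ) - 1) (y - j (Fin.last k))

-- ## walk lemmas

lemma walk_snoc {N : ℕ} (σ : Fin N → Bool) (b : Bool) {n : ℕ} (hn : n ≤ N) :
    walk (Fin.snoc σ b) n = walk σ n := by
  unfold walk
  rw [Fin.sum_univ_castSucc]
  have h1 : ¬ ((Fin.last N : ℕ) < n) := by simp; omega
  rw [if_neg h1, add_zero]
  apply Finset.sum_congr rfl
  intro i _
  simp [Fin.snoc_castSucc]

lemma walk_snoc_last {N : ℕ} (σ : Fin N → Bool) (b : Bool) :
    walk (Fin.snoc σ b) (N + 1) = walk σ N + stepZ b := by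
  unfold walk
  rw [Fin.sum_univ_castSucc]
  have h1 : ((Fin.last N : ℕ) < N + 1) := by simp
  rw [if_pos h1, Fin.snoc_last]
  congr 1
  apply Finset.sum_congr rfl
  intro i _
  have : ((i.castSucc : Fin (N+1)) : ℕ) = (i : ℕ) := rfl
  simp [Fin.snoc_castSucc, this, i.isLt, Nat.lt_succ_of_lt i.isLt]

lemma walk_eq_sum {N : ℕ} (σ : Fin N → Bool) :
    walk σ N = ∑ i : Fin N, if σ i then (1 : ℤ) else -1 := by
  unfold walk stepZ
  exact Finset.sum_congr rfl fun i _ => by rw [if_pos i.isLt]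

-- ## sum over snoc of bools

lemma sum_snoc_bool {N : ℕ} (f : (Fin (N + 1) → Bool) → ℝ) :
    ∑ σ : Fin (N + 1) → Bool, f σ
      = ∑ σ : Fin N → Bool, ∑ b : Bool, f (Fin.snoc σ b) := by
  let e : (Fin N → Bool) × Bool ≃ (Fin (N + 1) → Bool) :=
    ⟨fun p => Fin.snoc p.1 p.2, fun σ => (Fin.init σ, σ (Fin.last N)),
      fun p => by simp [Fin.init_snoc, Fin.snoc_last],
      fun σ => Fin.snoc_init_self σ⟩
  rw [← Equiv.sum_comp e f, Fintype.sum_prod_type]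
  rfl

-- ## quenched recursion

lemma quenchedProb_rec (ω : ℕ → ℤ → ℝ) (ε : ℝ) (N : ℕ) (y : ℤ) :
    quenchedProb ω ε (N + 1) y
      = (1 + Real.sqrt ε * ω N (y - 1)) / 2 * quenchedProb ω ε N (y - 1)
        + (1 - Real.sqrt ε * ω N (y + 1)) / 2 * quenchedProb ω ε N (y + 1) := by
  unfold quenchedProb
  rw [sum_snoc_bool]
  rw [Finset.mul_sum, Finset.mul_sum, ← Finset.sum_add_distrib]
  apply Finset.sum_congr rfl
  intro σ _
  have hprod : ∀ b : Bool,
      (∏ i : Fin (N+1), (1 + (stepZ ((Fin.snoc σ b : Fin (N+1) → Bool) i) : ℝ) *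
          Real.sqrt ε * ω i (walk (Fin.snoc σ b) i)) / 2)
        = (∏ i : Fin N, (1 + (stepZ (σ i) : ℝ) * Real.sqrt ε * ω i (walk σ i)) / 2)
            * ((1 + (stepZ b : ℝ) * Real.sqrt ε * ω N (walk σ N)) / 2) := by
    intro b
    rw [Fin.prod_univ_castSucc]
    congr 1
    · apply Finset.prod_congr rfl
      intro i _
      have h1 : ((i.castSucc : Fin (N+1)) : ℕ) = (i : ℕ) := rfl
      rw [Fin.snoc_castSucc, h1, walk_snoc σ b (le_of_lt i.isLt)]
    · rw [Fin.snoc_last]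
      have h2 : ((Fin.last N : ℕ)) = N := rfl
      rw [h2, walk_snoc σ b (le_refl N)]
  rw [Fintype.sum_bool]
  rw [walk_snoc_last, walk_snoc_last, hprod true, hprod false]
  by_cases h1 : walk σ N = y - 1
  · have h2 : ¬ (walk σ N = y + 1) := by omega
    have ht : walk σ N + stepZ true = y := by simp [stepZ]; omega
    have hf : ¬ (walk σ N + stepZ false = y) := by simp [stepZ]; omega
    rw [if_pos ht, if_neg hf, if_pos h1, if_neg h2, h1]
    simp [stepZ]
    ring
  · by_cases h2 : walk σ N = y + 1
    · have ht : ¬ (walk σ N + stepZ true = y) := by simp [stepZ]; omega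
      have hf : walk σ N + stepZ false = y := by simp [stepZ]; omega
      rw [if_neg ht, if_pos hf, if_neg h1, if_pos h2, h2]
      simp [stepZ]
      ring
    · have ht : ¬ (walk σ N + stepZ true = y) := by simp [stepZ]; omega
      have hf : ¬ (walk σ N + stepZ false = y) := by simp [stepZ]; omega
      rw [if_neg ht, if_neg hf, if_neg h1, if_neg h2]
      ring

-- ## ssrw lemmas

lemma ssrwProb_eq_quenched (N : ℕ) (m : ℤ) :
    ssrwProb N m = quenchedProb (fun _ _ => 0) 0 N m := by
  unfold ssrwProb quenchedProb
  rw [← Finset.sum_filter]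
  have hfe : (Finset.univ.filter fun σ : Fin N → Bool =>
        (∑ i : Fin N, if σ i then (1 : ℤ) else -1) = m)
      = (Finset.univ.filter fun σ : Fin N → Bool => walk σ N = m) := by
    apply Finset.filter_congr
    intro σ _
    rw [walk_eq_sum]
  rw [hfe]
  rw [Finset.sum_congr rfl (fun σ _ => show
      (∏ i : Fin N, (1 + (stepZ (σ i) : ℝ) * Real.sqrt 0 * (fun _ _ => (0:ℝ)) i (walk σ i)) / 2)
        = (1:ℝ)/2^N from by simp [Finset.prod_const, one_div, ← inv_pow])]
  rw [Finset.sum_const, nsmul_eq_mul]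
  ring

lemma ssrwProb_rec (N : ℕ) (m : ℤ) :
    ssrwProb (N + 1) m = (ssrwProb N (m - 1) + ssrwProb N (m + 1)) / 2 := by
  rw [ssrwProb_eq_quenched, ssrwProb_eq_quenched, ssrwProb_eq_quenched, quenchedProb_rec]
  ring

lemma ssrwProb_zero (m : ℤ) : ssrwProb 0 m = if m = 0 then 1 else 0 := by
  unfold ssrwProb
  simp only [pow_zero, div_one]
  by_cases h : m = 0
  · subst h
    rw [if_pos rfl, Finset.filter_true_of_mem (fun σ _ => by simp)]
    simp
  · rw [if_neg h, Finset.filter_false_of_mem (fun σ _ => by simp; omega), Finset.card_empty]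
    simp

lemma ssrwProb_support {n : ℕ} {m : ℤ} (h : ssrwProb n m ≠ 0) : |m| ≤ (n : ℤ) := by
  unfold ssrwProb at h
  have hcard : (Finset.univ.filter fun σ : Fin n → Bool =>
      (∑ i : Fin n, if σ i then (1 : ℤ) else -1) = m).card ≠ 0 := by
    intro h0
    rw [h0] at h
    simp at h
  obtain ⟨σ, hσ⟩ := Finset.card_pos.mp (Nat.pos_of_ne_zero hcard)
  rw [Finset.mem_filter] at hσ
  rw [← hσ.2]
  calc |∑ i : Fin n, if σ i then (1:ℤ) else -1|
      ≤ ∑ i : Fin n, |if σ i then (1:ℤ) else -1| := Finset.abs_sum_le_sum_abs _ _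
    _ = ∑ _i : Fin n, (1:ℤ) := Finset.sum_congr rfl (fun i _ => by split <;> simp)
    _ ≤ (n : ℤ) := by simp

lemma Dker_rec (n : ℕ) (d : ℤ) :
    Dker (n + 1) d = (Dker n (d - 1) + Dker n (d + 1)) / 2 := by
  unfold Dker
  rw [ssrwProb_rec, ssrwProb_rec,
    show d - 1 + 1 = d from by ring, show d + 1 - 1 = d from by ring]
  ring

lemma Dker_zero (d : ℤ) :
    Dker 0 d = (if d = 1 then (1:ℝ) else 0) - (if d = -1 then 1 else 0) := by
  unfold Dker
  rw [ssrwProb_zero, ssrwProb_zero]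
  congr 1 <;> [skip; skip] <;> (apply if_congr _ rfl rfl; omega)

lemma Dker_support {n : ℕ} {d : ℤ} (h : Dker n d ≠ 0) : |d| ≤ (n : ℤ) + 1 := by
  unfold Dker at h
  by_contra hc
  push_neg at hc
  have h1 : ssrwProb n (d - 1) = 0 := by
    by_contra h1
    have hs := ssrwProb_support h1
    have h3 : |d| ≤ |d - 1| + 1 := by
      have := abs_add_le (d - 1) 1
      rw [show d - 1 + 1 = d from by ring] at this
      simpa using this
    linarith
  have h2 : ssrwProb n (d + 1) = 0 := by
    by_contra h2
    have hs := ssrwProb_support h2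
    have h3 : |d| ≤ |d + 1| + 1 := by
      have := abs_add_le (d + 1) (-1)
      rw [show d + 1 + (-1) = d from by ring] at this
      simpa using this
    linarith
  rw [h1, h2] at h
  simp at h

-- ## psiCoef support

lemma psiCoef_support {N : ℕ} {y : ℤ} {k : ℕ} {i : Fin (k+1) → Fin N} {j : Fin (k+1) → ℤ}
    (h : psiCoef N y k i j ≠ 0) : ∀ l : Fin (k+1), |j l| ≤ (N : ℤ) * ((l : ℕ) + 1) := by
  unfold psiCoef at h
  have h1 : ssrwProb (i 0) (j 0) ≠ 0 := by
    intro h0; rw [h0] at h; simp at h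
  have h2 : ∀ l : Fin k,
      Dker ((i l.succ : ℕ) - (i l.castSucc : ℕ) - 1) (j l.succ - j l.castSucc) ≠ 0 := by
    intro l h0
    apply h
    rw [Finset.prod_eq_zero (Finset.mem_univ l) h0]
    ring
  have hbase : |j 0| ≤ (N : ℤ) := by
    have := ssrwProb_support h1
    have h3 : ((i 0 : ℕ) : ℤ) ≤ N := by exact_mod_cast le_of_lt (i 0).isLt
    linarith
  have hgap : ∀ l : Fin k, |j l.succ - j l.castSucc| ≤ (N : ℤ) := by
    intro l
    have := Dker_support (h2 l)
    have h3 : ((i l.succ : ℕ) - (i l.castSucc : ℕ) - 1) + 1 ≤ N := by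
      have := (i l.succ).isLt
      omega
    have h4 : ((((i l.succ : ℕ) - (i l.castSucc : ℕ) - 1 : ℕ)) : ℤ) + 1 ≤ (N : ℤ) := by
      exact_mod_cast h3
    linarith
  have key : ∀ n (hn : n < k + 1), |j ⟨n, hn⟩| ≤ (N : ℤ) * ((n : ℕ) + 1) := by
    intro n
    induction n with
    | zero => intro hn; simpa using hbase
    | succ m ih =>
        intro hn
        have hm : m < k + 1 := by omega
        have hmk : m < k := by omega
        have e1 : (⟨m + 1, hn⟩ : Fin (k+1)) = (⟨m, hmk⟩ : Fin k).succ := rfl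
        have e2 : (⟨m, hm⟩ : Fin (k+1)) = (⟨m, hmk⟩ : Fin k).castSucc := rfl
        have h5 : |j ⟨m + 1, hn⟩| ≤ |j ⟨m, hm⟩| + |j ⟨m + 1, hn⟩ - j ⟨m, hm⟩| := by
          have h := abs_add_le (j ⟨m, hm⟩) (j ⟨m + 1, hn⟩ - j ⟨m, hm⟩)
          rw [show j ⟨m, hm⟩ + (j ⟨m + 1, hn⟩ - j ⟨m, hm⟩) = j ⟨m + 1, hn⟩ from by
            ring] at h
          exact h
        have h6 := hgap ⟨m, hmk⟩
        rw [← e1, ← e2] at h6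
        have h7 := ih hm
        push_cast at h5 h6 h7 ⊢
        linarith
  intro l
  have := key l l.isLt
  simpa using this

-- ## monoSet

lemma monoFilter_empty {N k : ℕ} (hk : N ≤ k) :
    (Finset.univ.filter fun i : Fin (k + 1) → Fin N => ∀ a b, a < b → i a < i b) = ∅ := by
  rw [Finset.filter_eq_empty_iff]
  intro i _
  intro hmono
  have hsm : StrictMono i := fun a b hab => hmono a b hab
  have hinj : Function.Injective i := hsm.injective
  have := Fintype.card_le_of_injective i hinj
  simp at this
  omega

-- ## psiCoef under castSucc

lemma psiCoef_castSucc {N k : ℕ} (y : ℤ) (i : Fin (k+1) → Fin N) (j : Fin (k+1) → ℤ) :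
    psiCoef (N+1) y k (fun l => (i l).castSucc) j
      = (psiCoef N (y-1) k i j + psiCoef N (y+1) k i j) / 2 := by
  unfold psiCoef
  simp only [Fin.coe_castSucc]
  rw [show N + 1 - (i (Fin.last k) : ℕ) - 1 = (N - (i (Fin.last k) : ℕ) - 1) + 1 from by
      have := (i (Fin.last k)).isLt; omega,
    Dker_rec,
    show y - j (Fin.last k) - 1 = (y - 1) - j (Fin.last k) from by ring,
    show y - j (Fin.last k) + 1 = (y + 1) - j (Fin.last k) from by ring]
  ring

-- ## psiCoef under snoc

lemma psiCoef_snoc {N k : ℕ} (y b : ℤ) (i : Fin (k+1) → Fin N) (j : Fin (k+1) → ℤ) :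
    psiCoef (N+1) y (k+1)
        (Fin.snoc (fun l => (i l).castSucc) (Fin.last N)) (Fin.snoc j b)
      = psiCoef N b k i j * Dker 0 (y - b) / 2 := by
  unfold psiCoef
  have hz : (0 : Fin (k+2)) = (0 : Fin (k+1)).castSucc := rfl
  rw [hz, Fin.snoc_castSucc, Fin.snoc_castSucc]
  rw [Fin.prod_univ_castSucc]
  have hterm : ∀ l : Fin k,
      Dker (((Fin.snoc (fun l => (i l).castSucc) (Fin.last N) : Fin (k+2) → Fin (N+1))
              (l.castSucc.succ) : ℕ)
            - ((Fin.snoc (fun l => (i l).castSucc) (Fin.last N) : Fin (k+2) → Fin (N+1))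
              (l.castSucc.castSucc) : ℕ) - 1)
          ((Fin.snoc j b : Fin (k+2) → ℤ) l.castSucc.succ
            - (Fin.snoc j b : Fin (k+2) → ℤ) l.castSucc.castSucc)
        = Dker ((i l.succ : ℕ) - (i l.castSucc : ℕ) - 1) (j l.succ - j l.castSucc) := by
    intro l
    rw [Fin.succ_castSucc, Fin.snoc_castSucc, Fin.snoc_castSucc, Fin.snoc_castSucc,
      Fin.snoc_castSucc]
    rfl
  rw [Finset.prod_congr rfl (fun l _ => hterm l)]
  have hlast1 : (Fin.last k).succ = Fin.last (k+1) := Fin.succ_last k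
  rw [hlast1, Fin.snoc_last, Fin.snoc_last, Fin.snoc_castSucc, Fin.snoc_castSucc]
  have hN : (N : ℕ) + 1 - ((Fin.last N : Fin (N+1)) : ℕ) - 1 = 0 := by
    simp
  rw [hN]
  have hl : ((Fin.last N : Fin (N+1)) : ℕ) = N := rfl
  rw [hl]
  simp only [Fin.coe_castSucc]
  ring

-- ## snoc sum over piFinset

lemma sum_piFinset_snoc {n : ℕ} (S : Finset ℤ) (f : (Fin (n+1) → ℤ) → ℝ) :
    ∑ j ∈ Fintype.piFinset (fun _ : Fin (n+1) => S), f j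
      = ∑ j ∈ Fintype.piFinset (fun _ : Fin n => S), ∑ b ∈ S, f (Fin.snoc j b) := by
  rw [← Finset.sum_product']
  apply Finset.sum_bij' (i := fun j (_ : j ∈ Fintype.piFinset (fun _ : Fin (n+1) => S)) =>
      (Fin.init j, j (Fin.last n)))
    (j := fun p (_ : p ∈ (Fintype.piFinset (fun _ : Fin n => S)) ×ˢ S) => Fin.snoc p.1 p.2)
  · intro a ha
    rw [Finset.mem_product]
    rw [Fintype.mem_piFinset] at ha
    constructor
    · rw [Fintype.mem_piFinset]
      intro l
      exact ha _
    · exact ha _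
  · intro p hp
    rw [Finset.mem_product] at hp
    rw [Fintype.mem_piFinset]
    intro a
    induction a using Fin.lastCases with
    | last => rw [Fin.snoc_last]; exact hp.2
    | cast l =>
        rw [Fin.snoc_castSucc]
        exact Fintype.mem_piFinset.mp hp.1 l
  · intro a ha
    exact Fin.snoc_init_self a
  · intro p hp
    simp [Fin.init_snoc, Fin.snoc_last]
  · intro a ha
    rw [Fin.snoc_init_self]

-- ## definitions

noncomputable def chaosSum (ω : ℕ → ℤ → ℝ) (ε : ℝ) (N : ℕ) (y : ℤ) : ℝ :=
  ssrwProb N y +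
    ∑ k ∈ Finset.range N,
      Real.sqrt ε ^ (k + 1) *
        ∑ i ∈ Finset.univ.filter
            (fun i : Fin (k + 1) → Fin N => ∀ a b : Fin (k + 1), a < b → i a < i b),
          ∑' j : Fin (k + 1) → ℤ,
            psiCoef N y k i j * ∏ l : Fin (k + 1), ω (i l) (j l)

noncomputable def innerT (ω : ℕ → ℤ → ℝ) (N : ℕ) (y : ℤ) (k : ℕ) (S : Finset ℤ)
    (i : Fin (k + 1) → Fin N) : ℝ :=
  ∑ j ∈ Fintype.piFinset (fun _ : Fin (k + 1) => S),
    psiCoef N y k i j * ∏ l : Fin (k + 1), ω (i l) (j l)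

def monoSet (N k : ℕ) : Finset (Fin (k + 1) → Fin N) :=
  Finset.univ.filter fun i : Fin (k + 1) → Fin N => ∀ a b : Fin (k + 1), a < b → i a < i b

-- ## tsum to finite sum

lemma tsum_eq_innerT (ω : ℕ → ℤ → ℝ) (N : ℕ) (y : ℤ) (k : ℕ) (i : Fin (k+1) → Fin N)
    (S : Finset ℤ) (hS : ∀ m : ℤ, |m| ≤ (N : ℤ) * ((k : ℤ) + 1) → m ∈ S) :
    (∑' j : Fin (k + 1) → ℤ, psiCoef N y k i j * ∏ l : Fin (k + 1), ω (i l) (j l))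
      = innerT ω N y k S i := by
  apply tsum_eq_sum
  intro j hj
  by_contra hne
  have hpsi : psiCoef N y k i j ≠ 0 := fun h0 => hne (by rw [h0]; ring)
  apply hj
  rw [Fintype.mem_piFinset]
  intro l
  apply hS
  have h1 := psiCoef_support hpsi l
  have h2 : ((l : ℕ) : ℤ) + 1 ≤ (k : ℤ) + 1 := by
    have := l.isLt
    omega
  have h3 : (0:ℤ) ≤ (N : ℤ) := Int.ofNat_nonneg N
  calc |j l| ≤ (N : ℤ) * ((l : ℕ) + 1) := h1
    _ ≤ (N : ℤ) * ((k : ℤ) + 1) := by nlinarith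

lemma chaosSum_eq_finite (ω : ℕ → ℤ → ℝ) (ε : ℝ) (N : ℕ) (y : ℤ) (S : Finset ℤ)
    (hS : ∀ m : ℤ, |m| ≤ (N : ℤ) * ((N : ℤ) + 1) → m ∈ S) :
    chaosSum ω ε N y = ssrwProb N y +
      ∑ k ∈ Finset.range N,
        Real.sqrt ε ^ (k + 1) * ∑ i ∈ monoSet N k, innerT ω N y k S i := by
  unfold chaosSum
  congr 1
  apply Finset.sum_congr rfl
  intro k hk
  congr 1
  apply Finset.sum_congr rfl
  intro i _
  apply tsum_eq_innerT
  intro m hm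
  apply hS
  have hk' : (k : ℤ) + 1 ≤ (N : ℤ) + 1 := by
    have := Finset.mem_range.mp hk
    omega
  have h3 : (0:ℤ) ≤ (N : ℤ) := Int.ofNat_nonneg N
  calc |m| ≤ (N:ℤ) * ((k:ℤ) + 1) := hm
    _ ≤ (N:ℤ) * ((N:ℤ) + 1) := by nlinarith

-- ## castSucc / A part

lemma innerT_castSucc (ω : ℕ → ℤ → ℝ) (N : ℕ) (y : ℤ) (k : ℕ) (S : Finset ℤ)
    (i' : Fin (k+1) → Fin (N+1)) (i : Fin (k+1) → Fin N)
    (hcoe : ∀ l, i' l = (i l).castSucc) :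
    innerT ω (N+1) y k S i'
      = (innerT ω N (y-1) k S i + innerT ω N (y+1) k S i) / 2 := by
  have hie : i' = fun l => (i l).castSucc := funext hcoe
  rw [hie]
  unfold innerT
  rw [← Finset.sum_add_distrib, Finset.sum_div]
  apply Finset.sum_congr rfl
  intro j _
  rw [psiCoef_castSucc]
  have hω : (∏ l : Fin (k+1), ω (((i l).castSucc : Fin (N+1)) : ℕ) (j l))
      = ∏ l : Fin (k+1), ω ((i l : ℕ)) (j l) := by
    apply Finset.prod_congr rfl
    intro l _
    rfl
  rw [hω]
  ring

lemma Asum (ω : ℕ → ℤ → ℝ) (N : ℕ) (y : ℤ) (k : ℕ) (S : Finset ℤ) :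
    ∑ i ∈ (monoSet (N+1) k).filter (fun i => ¬ i (Fin.last k) = Fin.last N),
        innerT ω (N+1) y k S i
      = ∑ i ∈ monoSet N k, (innerT ω N (y-1) k S i + innerT ω N (y+1) k S i) / 2 := by
  have hmem : ∀ a ∈ (monoSet (N+1) k).filter (fun i => ¬ i (Fin.last k) = Fin.last N),
      ∀ l, a l ≠ Fin.last N := by
    intro a ha l
    rw [Finset.mem_filter] at ha
    obtain ⟨ha1, ha2⟩ := ha
    rw [monoSet, Finset.mem_filter] at ha1
    by_cases hl : l = Fin.last k
    · rw [hl]; exact ha2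
    · have hlt : l < Fin.last k := Fin.lt_last_iff_ne_last.mpr hl
      have h1 : a l < a (Fin.last k) := ha1.2 _ _ hlt
      have h2 : a (Fin.last k) < Fin.last N := Fin.lt_last_iff_ne_last.mpr ha2
      exact Fin.lt_last_iff_ne_last.mp (lt_trans h1 h2)
  apply Finset.sum_bij'
    (i := fun a ha => fun l => (a l).castPred (hmem a ha l))
    (j := fun a (_ : a ∈ monoSet N k) => fun l => (a l).castSucc)
  case hi =>
    intro a ha
    rw [monoSet, Finset.mem_filter]
    refine ⟨Finset.mem_univ _, ?_⟩
    intro p q hpq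
    rw [Finset.mem_filter, monoSet, Finset.mem_filter] at ha
    have := ha.1.2 p q hpq
    rw [Fin.lt_def] at this ⊢
    simpa using this
  case hj =>
    intro a ha
    rw [Finset.mem_filter]
    constructor
    · rw [monoSet, Finset.mem_filter] at ha ⊢
      refine ⟨Finset.mem_univ _, ?_⟩
      intro p q hpq
      have := ha.2 p q hpq
      rw [Fin.lt_def] at this ⊢
      simpa using this
    · simp only
      exact Fin.ne_last_of_lt (Fin.castSucc_lt_last _)
  case left_neg =>
    intro a ha
    funext l
    simp [Fin.castSucc_castPred]
  case right_neg =>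
    intro a ha
    funext l
    simp [Fin.castPred_castSucc]
  case h =>
    intro a ha
    exact innerT_castSucc ω N y k S a _
      (fun l => (Fin.castSucc_castPred (a l) (hmem a ha l)).symm)

-- ## pair sum

lemma sum_pair_support (S : Finset ℤ) {u v : ℤ} (huv : u ≠ v) (hu : u ∈ S) (hv : v ∈ S)
    (F : ℤ → ℝ) (h0 : ∀ b, b ≠ u → b ≠ v → F b = 0) : ∑ b ∈ S, F b = F u + F v := by
  have hsub : ({u, v} : Finset ℤ) ⊆ S := by
    intro x hx
    rcases Finset.mem_insert.mp hx with h | h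
    · rw [h]; exact hu
    · rw [Finset.mem_singleton.mp h]; exact hv
  calc ∑ b ∈ S, F b = ∑ b ∈ ({u, v} : Finset ℤ), F b := by
        refine (Finset.sum_subset hsub ?_).symm
        intro x _ hxs
        simp only [Finset.mem_insert, Finset.mem_singleton] at hxs
        push_neg at hxs
        exact h0 x hxs.1 hxs.2
    _ = F u + F v := Finset.sum_pair huv

-- ## snoc / B part

lemma innerT_snoc (ω : ℕ → ℤ → ℝ) (N : ℕ) (y : ℤ) (k : ℕ) (S : Finset ℤ)
    (hy1 : y - 1 ∈ S) (hy2 : y + 1 ∈ S)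
    (a : Fin (k+2) → Fin (N+1)) (i : Fin (k+1) → Fin N)
    (hcoe : a = Fin.snoc (fun l => (i l).castSucc) (Fin.last N)) :
    innerT ω (N+1) y (k+1) S a
      = (ω N (y-1) * innerT ω N (y-1) k S i - ω N (y+1) * innerT ω N (y+1) k S i) / 2 := by
  rw [hcoe]
  unfold innerT
  rw [sum_piFinset_snoc S]
  have hterm : ∀ (j : Fin (k+1) → ℤ) (b : ℤ),
      psiCoef (N+1) y (k+1) (Fin.snoc (fun l => (i l).castSucc) (Fin.last N)) (Fin.snoc j b)
          * ∏ l : Fin (k+2),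
              ω (((Fin.snoc (fun l => (i l).castSucc) (Fin.last N) : Fin (k+2) → Fin (N+1)) l : ℕ))
                ((Fin.snoc j b : Fin (k+2) → ℤ) l)
        = (psiCoef N b k i j * (∏ l : Fin (k+1), ω (i l) (j l)) * ω N b) * Dker 0 (y - b) / 2 := by
    intro j b
    rw [psiCoef_snoc]
    have hω : (∏ l : Fin (k+2),
        ω (((Fin.snoc (fun l => (i l).castSucc) (Fin.last N) : Fin (k+2) → Fin (N+1)) l : ℕ))
          ((Fin.snoc j b : Fin (k+2) → ℤ) l))
        = (∏ l : Fin (k+1), ω (i l) (j l)) * ω N b := by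
      rw [Fin.prod_univ_castSucc]
      congr 1
      · apply Finset.prod_congr rfl
        intro l _
        rw [Fin.snoc_castSucc, Fin.snoc_castSucc]
        rfl
      · rw [Fin.snoc_last, Fin.snoc_last]
        rfl
    rw [hω]
    ring
  rw [Finset.sum_congr rfl (fun j _ => Finset.sum_congr rfl (fun b _ => hterm j b))]
  have hbsum : ∀ j : Fin (k+1) → ℤ,
      (∑ b ∈ S, (psiCoef N b k i j * (∏ l : Fin (k+1), ω (i l) (j l)) * ω N b) * Dker 0 (y - b) / 2)
        = (ω N (y-1) * (psiCoef N (y-1) k i j * ∏ l : Fin (k+1), ω (i l) (j l))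
            - ω N (y+1) * (psiCoef N (y+1) k i j * ∏ l : Fin (k+1), ω (i l) (j l))) / 2 := by
    intro j
    rw [sum_pair_support S (u := y - 1) (v := y + 1) (by omega) hy1 hy2]
    · rw [show y - (y - 1) = 1 from by ring, show y - (y + 1) = -1 from by ring,
        Dker_zero, Dker_zero]
      norm_num
      ring
    · intro b hb1 hb2
      have hD : Dker 0 (y - b) = 0 := by
        rw [Dker_zero, if_neg (by omega), if_neg (by omega)]
        ring
      rw [hD]
      ring
  rw [Finset.sum_congr rfl (fun j _ => hbsum j)]
  rw [← Finset.sum_div, Finset.sum_sub_distrib, ← Finset.mul_sum, ← Finset.mul_sum]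

lemma Bsum (ω : ℕ → ℤ → ℝ) (N : ℕ) (y : ℤ) (k : ℕ) (S : Finset ℤ)
    (hy1 : y - 1 ∈ S) (hy2 : y + 1 ∈ S) :
    ∑ i ∈ (monoSet (N+1) (k+1)).filter (fun i => i (Fin.last (k+1)) = Fin.last N),
        innerT ω (N+1) y (k+1) S i
      = ∑ i ∈ monoSet N k,
          (ω N (y-1) * innerT ω N (y-1) k S i - ω N (y+1) * innerT ω N (y+1) k S i) / 2 := by
  have hmem : ∀ a ∈ (monoSet (N+1) (k+1)).filter (fun i => i (Fin.last (k+1)) = Fin.last N),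
      ∀ l : Fin (k+1), a l.castSucc ≠ Fin.last N := by
    intro a ha l
    rw [Finset.mem_filter] at ha
    obtain ⟨ha1, ha2⟩ := ha
    rw [monoSet, Finset.mem_filter] at ha1
    have h1 : a l.castSucc < a (Fin.last (k+1)) := ha1.2 _ _ (Fin.castSucc_lt_last l)
    rw [ha2] at h1
    exact Fin.lt_last_iff_ne_last.mp h1
  apply Finset.sum_bij'
    (i := fun a ha => fun l : Fin (k+1) => (a l.castSucc).castPred (hmem a ha l))
    (j := fun a (_ : a ∈ monoSet N k) =>
      Fin.snoc (fun l => (a l).castSucc) (Fin.last N))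
  case hi =>
    intro a ha
    rw [monoSet, Finset.mem_filter]
    refine ⟨Finset.mem_univ _, ?_⟩
    intro p q hpq
    rw [Finset.mem_filter, monoSet, Finset.mem_filter] at ha
    have := ha.1.2 p.castSucc q.castSucc (by rwa [Fin.castSucc_lt_castSucc_iff])
    rw [Fin.lt_def] at this ⊢
    simpa using this
  case hj =>
    intro a ha
    rw [Finset.mem_filter]
    rw [monoSet, Finset.mem_filter] at ha ⊢
    refine ⟨⟨Finset.mem_univ _, ?_⟩, ?_⟩
    · intro p q hpq
      induction q using Fin.lastCases with
      | last =>
          rw [Fin.snoc_last]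
          have hp : p ≠ Fin.last (k+1) := Fin.ne_last_of_lt hpq
          obtain ⟨p', hp'⟩ := Fin.exists_castSucc_eq.mpr hp
          rw [← hp', Fin.snoc_castSucc]
          exact Fin.castSucc_lt_last _
      | cast q' =>
          have hp : p ≠ Fin.last (k+1) := Fin.ne_last_of_lt (lt_of_lt_of_le hpq (Fin.le_last _))
          obtain ⟨p', hp'⟩ := Fin.exists_castSucc_eq.mpr hp
          rw [← hp', Fin.snoc_castSucc, Fin.snoc_castSucc]
          rw [Fin.castSucc_lt_castSucc_iff]
          have hpq' : p' < q' := by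
            rw [← hp'] at hpq
            rwa [Fin.castSucc_lt_castSucc_iff] at hpq
          have := ha.2 p' q' hpq'
          rw [Fin.lt_def] at this ⊢
          simpa using this
    · exact Fin.snoc_last _ _
  case left_neg =>
    intro a ha
    funext l
    induction l using Fin.lastCases with
    | last =>
        rw [Fin.snoc_last]
        rw [Finset.mem_filter] at ha
        exact ha.2.symm
    | cast l' =>
        rw [Fin.snoc_castSucc]
        simp [Fin.castSucc_castPred]
  case right_neg =>
    intro a ha
    funext l
    have : (Fin.snoc (fun l => (a l).castSucc) (Fin.last N) : Fin (k+2) → Fin (N+1)) l.castSucc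
        = (a l).castSucc := Fin.snoc_castSucc _ _ _
    simp only [this]
    simp [Fin.castPred_castSucc]
  case h =>
    intro a ha
    apply innerT_snoc ω N y k S hy1 hy2
    funext l
    induction l using Fin.lastCases with
    | last =>
        rw [Fin.snoc_last]
        rw [Finset.mem_filter] at ha
        exact ha.2
    | cast l' =>
        rw [Fin.snoc_castSucc]
        simp [Fin.castSucc_castPred]

lemma Bzero (ω : ℕ → ℤ → ℝ) (N : ℕ) (y : ℤ) (S : Finset ℤ)
    (hy1 : y - 1 ∈ S) (hy2 : y + 1 ∈ S) :
    ∑ i ∈ (monoSet (N+1) 0).filter (fun i => i (Fin.last 0) = Fin.last N),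
        innerT ω (N+1) y 0 S i
      = (ω N (y-1) * ssrwProb N (y-1) - ω N (y+1) * ssrwProb N (y+1)) / 2 := by
  have hset : (monoSet (N+1) 0).filter (fun i => i (Fin.last 0) = Fin.last N)
      = {fun _ : Fin 1 => Fin.last N} := by
    ext i
    rw [Finset.mem_filter, monoSet, Finset.mem_filter, Finset.mem_singleton]
    constructor
    · intro h
      funext l
      have : l = Fin.last 0 := Fin.eq_zero l
      rw [this]
      exact h.2
    · intro h
      subst h
      refine ⟨⟨Finset.mem_univ _, ?_⟩, rfl⟩
      intro p q hpq
      exact absurd hpq (by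
        have : p = q := by rw [Fin.eq_zero p, Fin.eq_zero q]
        simp [this])
  rw [hset, Finset.sum_singleton]
  unfold innerT
  have hpi0 : (Fintype.piFinset (fun _ : Fin 1 => S))
      = Fintype.piFinset (fun _ : Fin (0+1) => S) := rfl
  rw [sum_piFinset_snoc S (n := 0)]
  have hpiempty : (Fintype.piFinset (fun _ : Fin 0 => S)) = {(Fin.elim0 : Fin 0 → ℤ)} := by
    apply Finset.eq_singleton_iff_unique_mem.mpr
    constructor
    · rw [Fintype.mem_piFinset]
      intro a
      exact a.elim0
    · intro j _
      funext l
      exact l.elim0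
  rw [hpiempty, Finset.sum_singleton]
  have hterm : ∀ b : ℤ,
      psiCoef (N+1) y 0 (fun _ => Fin.last N) (Fin.snoc Fin.elim0 b)
          * ∏ l : Fin 1, ω (((fun _ : Fin 1 => Fin.last N) l : ℕ)) ((Fin.snoc Fin.elim0 b : Fin 1 → ℤ) l)
        = (ω N b * ssrwProb N b) * Dker 0 (y - b) / 2 := by
    intro b
    unfold psiCoef
    have hb : ∀ l : Fin 1, (Fin.snoc (Fin.elim0 : Fin 0 → ℤ) b : Fin 1 → ℤ) l = b := by
      intro l
      rw [Fin.eq_zero l]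
      exact Fin.snoc_last _ _
    simp only [Fin.prod_univ_one, Finset.univ_eq_empty, Finset.prod_empty, hb, Fin.val_last]
    rw [show N + 1 - N - 1 = 0 from by omega]
    ring
  rw [Finset.sum_congr rfl (fun b _ => hterm b)]
  rw [sum_pair_support S (u := y - 1) (v := y + 1) (by omega) hy1 hy2]
  · rw [show y - (y - 1) = 1 from by ring, show y - (y + 1) = -1 from by ring,
      Dker_zero, Dker_zero]
    norm_num
    ring
  · intro b hb1 hb2
    have hD : Dker 0 (y - b) = 0 := by
      rw [Dker_zero, if_neg (by omega), if_neg (by omega)]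
      ring
    rw [hD]
    ring

-- ## base case

lemma chaosSum_zero (ω : ℕ → ℤ → ℝ) (ε : ℝ) (y : ℤ) :
    chaosSum ω ε 0 y = ssrwProb 0 y := by
  unfold chaosSum
  simp

-- ## main recursion for chaosSum

lemma chaosSum_rec (ω : ℕ → ℤ → ℝ) (ε : ℝ) (N : ℕ) (y : ℤ) :
    chaosSum ω ε (N + 1) y
      = (1 + Real.sqrt ε * ω N (y - 1)) / 2 * chaosSum ω ε N (y - 1)
        + (1 - Real.sqrt ε * ω N (y + 1)) / 2 * chaosSum ω ε N (y + 1) := by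
  classical
  set C : ℤ := ((N:ℤ) + 1) * ((N:ℤ) + 2) + |y| + 2 with hC
  set S : Finset ℤ := Finset.Icc (-C) C with hSdef
  have hNnn : (0:ℤ) ≤ (N:ℤ) := Int.ofNat_nonneg N
  have hynn : (0:ℤ) ≤ |y| := abs_nonneg y
  have habs : ∀ m : ℤ, |m| ≤ C → m ∈ S := by
    intro m hm
    rw [hSdef, Finset.mem_Icc]
    constructor
    · linarith [neg_abs_le m]
    · linarith [le_abs_self m]
  have hS1 : ∀ m : ℤ, |m| ≤ ((N+1 : ℕ):ℤ) * (((N+1:ℕ):ℤ) + 1) → m ∈ S := by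
    intro m hm
    apply habs
    push_cast at hm
    nlinarith
  have hS0 : ∀ m : ℤ, |m| ≤ (N:ℤ) * ((N:ℤ) + 1) → m ∈ S := by
    intro m hm
    apply habs
    nlinarith
  have hy1 : y - 1 ∈ S := by
    apply habs
    have h := abs_add_le y (-1)
    rw [show y + (-1) = y - 1 from by ring] at h
    simp at h
    nlinarith
  have hy2 : y + 1 ∈ S := by
    apply habs
    have h := abs_add_le y 1
    simp at h
    nlinarith
  rw [chaosSum_eq_finite ω ε (N+1) y S hS1, chaosSum_eq_finite ω ε N (y-1) S hS0,
    chaosSum_eq_finite ω ε N (y+1) S hS0]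
  -- abbreviations
  set w1 : ℝ := ω N (y-1) with hw1
  set w2 : ℝ := ω N (y+1) with hw2
  set s1 : ℝ := ssrwProb N (y-1) with hs1
  set s2 : ℝ := ssrwProb N (y+1) with hs2
  set U1 : ℕ → ℝ := fun k => ∑ i ∈ monoSet N k, innerT ω N (y-1) k S i with hU1
  set U2 : ℕ → ℝ := fun k => ∑ i ∈ monoSet N k, innerT ω N (y+1) k S i with hU2
  set G : ℕ → ℝ := fun k =>
    Nat.casesOn k ((w1 * s1 - w2 * s2) / 2)
      (fun k' => ∑ i ∈ monoSet N k',
        (w1 * innerT ω N (y-1) k' S i - w2 * innerT ω N (y+1) k' S i) / 2) with hG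
  have hsplit : ∀ k, (∑ i ∈ monoSet (N+1) k, innerT ω (N+1) y k S i)
      = G k + (U1 k + U2 k) / 2 := by
    intro k
    rw [← Finset.sum_filter_add_sum_filter_not (monoSet (N+1) k)
      (fun i => i (Fin.last k) = Fin.last N)]
    congr 1
    · cases k with
      | zero => exact Bzero ω N y S hy1 hy2
      | succ k' => exact Bsum ω N y k' S hy1 hy2
    · rw [Asum ω N y k S, ← Finset.sum_div, ← Finset.sum_add_distrib]
  have hGsucc : ∀ k : ℕ, G (k+1) = (w1 * U1 k - w2 * U2 k) / 2 := by
    intro k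
    show (∑ i ∈ monoSet N k,
        (w1 * innerT ω N (y-1) k S i - w2 * innerT ω N (y+1) k S i) / 2)
      = (w1 * U1 k - w2 * U2 k) / 2
    rw [← Finset.sum_div, Finset.sum_sub_distrib, ← Finset.mul_sum, ← Finset.mul_sum]
  have hUtop : U1 N = 0 ∧ U2 N = 0 := by
    constructor <;>
      · show (∑ i ∈ monoSet N N, _) = (0:ℝ)
        rw [monoSet, monoFilter_empty (le_refl N), Finset.sum_empty]
  -- decompose the big sum
  have hmain : (∑ k ∈ Finset.range (N+1),
        Real.sqrt ε ^ (k+1) * ∑ i ∈ monoSet (N+1) k, innerT ω (N+1) y k S i)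
      = (∑ k ∈ Finset.range (N+1), Real.sqrt ε ^ (k+1) * G k)
        + (∑ k ∈ Finset.range (N+1), Real.sqrt ε ^ (k+1) * ((U1 k + U2 k)/2)) := by
    rw [← Finset.sum_add_distrib]
    apply Finset.sum_congr rfl
    intro k _
    rw [hsplit k]
    ring
  rw [hmain]
  set A : ℝ := ∑ k ∈ Finset.range N, Real.sqrt ε ^ (k+1) * U1 k with hA
  set B : ℝ := ∑ k ∈ Finset.range N, Real.sqrt ε ^ (k+1) * U2 k with hB
  have e2 : (∑ k ∈ Finset.range (N+1), Real.sqrt ε ^ (k+1) * ((U1 k + U2 k)/2))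
      = (A + B) / 2 := by
    rw [Finset.sum_range_succ, hUtop.1, hUtop.2]
    have : (∑ k ∈ Finset.range N, Real.sqrt ε ^ (k+1) * ((U1 k + U2 k)/2))
        = ∑ k ∈ Finset.range N,
            ((Real.sqrt ε ^ (k+1) * U1 k)/2 + (Real.sqrt ε ^ (k+1) * U2 k)/2) := by
      apply Finset.sum_congr rfl
      intro k _
      ring
    rw [this, Finset.sum_add_distrib, ← Finset.sum_div, ← Finset.sum_div, hA, hB]
    ring
  have e3 : (∑ k ∈ Finset.range (N+1), Real.sqrt ε ^ (k+1) * G k)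
      = Real.sqrt ε * ((w1 * s1 - w2 * s2)/2)
        + (Real.sqrt ε * w1 / 2 * A - Real.sqrt ε * w2 / 2 * B) := by
    rw [Finset.sum_range_succ']
    have h0 : Real.sqrt ε ^ (0+1) * G 0 = Real.sqrt ε * ((w1 * s1 - w2 * s2)/2) := by
      show Real.sqrt ε ^ (0+1) * ((w1 * s1 - w2 * s2) / 2) = _
      ring
    rw [h0]
    have hterm : ∀ k : ℕ, Real.sqrt ε ^ (k+1+1) * G (k+1)
        = Real.sqrt ε * w1 / 2 * (Real.sqrt ε ^ (k+1) * U1 k)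
          - Real.sqrt ε * w2 / 2 * (Real.sqrt ε ^ (k+1) * U2 k) := by
      intro k
      rw [hGsucc k]
      ring
    rw [Finset.sum_congr rfl (fun k _ => hterm k), Finset.sum_sub_distrib,
      ← Finset.mul_sum, ← Finset.mul_sum, hA, hB]
    ring
  rw [e2, e3, ssrwProb_rec N y]
  show (s1 + s2)/2 + _ = _
  ring

-- ## main theorem

lemma quenched_eq_chaos (ω : ℕ → ℤ → ℝ) (ε : ℝ) : ∀ N y,
    quenchedProb ω ε N y = chaosSum ω ε N y := by
  intro N
  induction N with
  | zero =>
      intro y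
      rw [chaosSum_zero]
      unfold quenchedProb
      rw [ssrwProb_zero]
      simp [walk]
      by_cases h : y = 0
      · subst h; simp
      · rw [if_neg h, if_neg (fun hh => h hh.symm)]
  | succ n ih =>
      intro y
      rw [quenchedProb_rec, chaosSum_rec, ih, ih]

/-- Polynomial chaos expansion (Lemma 2.1) of the quenched RWRE transition
probability in the environment variables: the chaos of degree `k+1` carries the
factor `ε^{(k+1)/2}` and coefficients `ψ_{k+1}`. -/
theorem quenchedProb_polynomial_chaos (ω : ℕ → ℤ → ℝ) (ε : ℝ) (hε : 0 ≤ ε)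
    (hbound : ∀ i j, |Real.sqrt ε * ω i j| ≤ 1) (N : ℕ) (hN : 1 ≤ N) (y : ℤ) :
    quenchedProb ω ε N y =
      ssrwProb N y +
        ∑ k ∈ Finset.range N,
          Real.sqrt ε ^ (k + 1) *
            ∑ i ∈ Finset.univ.filter
                (fun i : Fin (k + 1) → Fin N => ∀ a b : Fin (k + 1), a < b → i a < i b),
              ∑' j : Fin (k + 1) → ℤ,
                psiCoef N y k i j * ∏ l : Fin (k + 1), ω (i l) (j l) := by
  rw [quenched_eq_chaos]
  rfl
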